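/- If T is a bicentral tree with centers c1, c2, and T' is the rooted tree obtained by deleting the edge c1c2 and adding a new vertex r adjacent to both c1 and c2, then D(T) = D(T'). -/

import Mathlib

open SimpleGraph

variable {V : Type*}

/-- Eccentricity of a vertex: maximum distance to any vertex. -/
noncomputable def gEcc [Fintype V] (G : SimpleGraph V) (v : V) : ℕ :=
  Finset.univ.sup fun u => G.dist v u

/-- Radius: minimum eccentricity. -/
noncomputable def gRad [Fintype V] [Nonempty V] (G : SimpleGraph V) : ℕ :=
  Finset.univ.inf' Finset.univ_nonempty fun v => gEcc G v

/-- Diameter: maximum eccentricity. -/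
noncomputable def gDiam [Fintype V] (G : SimpleGraph V) : ℕ :=
  Finset.univ.sup fun v => gEcc G v

/-- Center: vertices of minimum eccentricity. -/
def gCenter [Fintype V] [Nonempty V] (G : SimpleGraph V) : Set V :=
  {v | gEcc G v = gRad G}

/-- A labeling with labels in `Fin r` is distinguishing if the only
label-preserving automorphism is the identity. -/
def IsDistinguishing (G : SimpleGraph V) {r : ℕ} (f : V → Fin r) : Prop :=
  ∀ φ : G ≃g G, (∀ v, f (φ v) = f v) → ∀ v, φ v = v

/-- The distinguishing number: least `r` admitting an `r`-distinguishing labeling. -/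
noncomputable def distinguishingNumber (G : SimpleGraph V) : ℕ :=
  sInf {r | ∃ f : V → Fin r, IsDistinguishing G f}

/-- The rooted tree obtained from `T` by deleting the edge `c₁c₂` and adding
a new root vertex (`none`) adjacent to both `c₁` and `c₂`. -/
def addRoot (T : SimpleGraph V) (c₁ c₂ : V) : SimpleGraph (Option V) :=
  SimpleGraph.fromRel (fun x y =>
    (∃ a b : V, x = some a ∧ y = some b ∧ T.Adj a b ∧
      ¬(a = c₁ ∧ b = c₂) ∧ ¬(a = c₂ ∧ b = c₁)) ∨
    (x = none ∧ (y = some c₁ ∨ y = some c₂)))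

set_option linter.unusedSectionVars false


/-- Graph isomorphisms preserve distance. -/
lemma iso_dist_le {W : Type*} {G : SimpleGraph W} (φ : G ≃g G) (u v : W) :
    G.dist (φ u) (φ v) ≤ G.dist u v := by
  by_cases h : G.Reachable u v
  · obtain ⟨p, -, hl⟩ := h.exists_path_of_dist
    calc G.dist (φ u) (φ v) ≤ (p.map φ.toHom).length := SimpleGraph.dist_le _
      _ = G.dist u v := by rw [SimpleGraph.Walk.length_map, hl]
  · rw [SimpleGraph.dist_eq_zero_of_not_reachable h]
    by_cases h2 : G.Reachable (φ u) (φ v)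
    · exact absurd ⟨(h2.some.map φ.symm.toHom).copy (by simp) (by simp)⟩ h
    · rw [SimpleGraph.dist_eq_zero_of_not_reachable h2]

lemma iso_dist {W : Type*} {G : SimpleGraph W} (φ : G ≃g G) (u v : W) :
    G.dist (φ u) (φ v) = G.dist u v := by
  refine le_antisymm (iso_dist_le φ u v) ?_
  have := iso_dist_le φ.symm (φ u) (φ v)
  simpa using this

lemma iso_ecc {W : Type*} [Fintype W] {G : SimpleGraph W} (φ : G ≃g G) (v : W) :
    gEcc G (φ v) = gEcc G v := by
  unfold gEcc
  refine le_antisymm (Finset.sup_le fun u _ => ?_) (Finset.sup_le fun u _ => ?_)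
  · have : G.dist (φ v) u = G.dist v (φ.symm u) := by
      conv_lhs => rw [show u = φ (φ.symm u) by simp, iso_dist]
    rw [this]; exact Finset.le_sup (Finset.mem_univ _)
  · rw [← iso_dist φ v u]; exact Finset.le_sup (Finset.mem_univ _)
section AddRootAdj
variable (T : SimpleGraph V) (c₁ c₂ : V)

lemma adj_some_some {a b : V} :
    (addRoot T c₁ c₂).Adj (some a) (some b) ↔
      T.Adj a b ∧ ¬(a = c₁ ∧ b = c₂) ∧ ¬(a = c₂ ∧ b = c₁) := by
  simp only [addRoot, fromRel_adj]
  constructor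
  · rintro ⟨hne, h | h⟩ <;>
    · rcases h with ⟨x, y, hx, hy, hadj, h1, h2⟩ | ⟨h, -⟩
      · simp only [Option.some.injEq] at hx hy
        first
        | (subst hx; subst hy; exact ⟨hadj, h1, h2⟩)
        | (subst hx; subst hy; exact ⟨hadj.symm, fun ⟨u1, u2⟩ => h2 ⟨u2, u1⟩,
            fun ⟨u1, u2⟩ => h1 ⟨u2, u1⟩⟩)
      · simp at h
  · rintro ⟨hadj, h1, h2⟩
    exact ⟨by simpa using hadj.ne, Or.inl (Or.inl ⟨a, b, rfl, rfl, hadj, h1, h2⟩)⟩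

lemma adj_none_some {a : V} :
    (addRoot T c₁ c₂).Adj none (some a) ↔ a = c₁ ∨ a = c₂ := by
  simp only [addRoot, fromRel_adj]
  constructor
  · rintro ⟨-, h | h⟩
    · rcases h with ⟨x, y, hx, -⟩ | ⟨-, hy⟩
      · simp at hx
      · rcases hy with h | h <;> simp_all
    · rcases h with ⟨x, y, -, hy, -⟩ | ⟨hy, -⟩
      · simp at hy
      · simp at hy
  · rintro (rfl | rfl)
    · exact ⟨by simp, by tauto⟩
    · exact ⟨by simp, by tauto⟩

lemma adj_some_none {a : V} :
    (addRoot T c₁ c₂).Adj (some a) none ↔ a = c₁ ∨ a = c₂ := by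
  rw [adj_comm]; exact adj_none_some T c₁ c₂

end AddRootAdj
section Walks
variable {T : SimpleGraph V} {c₁ c₂ : V}

lemma dist_add_dist_le {a u x : V} (p : T.Walk a u) (hx : x ∈ p.support) :
    T.dist a x + T.dist x u ≤ p.length := by
  classical
  have hlen : (p.takeUntil x hx).length + (p.dropUntil x hx).length = p.length := by
    rw [← SimpleGraph.Walk.length_append, p.take_spec hx]
  calc T.dist a x + T.dist x u
      ≤ (p.takeUntil x hx).length + (p.dropUntil x hx).length :=
        Nat.add_le_add (SimpleGraph.dist_le _) (SimpleGraph.dist_le _)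
    _ = p.length := hlen

lemma lift_walk : ∀ {a b : V} (p : T.Walk a b), s(c₁, c₂) ∉ p.edges →
    ∃ w : (addRoot T c₁ c₂).Walk (some a) (some b), w.length = p.length := by
  intro a b p
  induction p with
  | nil => exact fun _ => ⟨.nil, rfl⟩
  | @cons a m b h p ih =>
    intro he
    simp only [SimpleGraph.Walk.edges_cons, List.mem_cons] at he
    push_neg at he
    obtain ⟨w, hw⟩ := ih he.2
    have hAdj : (addRoot T c₁ c₂).Adj (some a) (some m) := by
      rw [adj_some_some]
      refine ⟨h, fun ⟨h1, h2⟩ => ?_, fun ⟨h1, h2⟩ => ?_⟩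
      · subst h1; subst h2; exact he.1 rfl
      · subst h1; subst h2; exact he.1 (Sym2.eq_swap)
    exact ⟨.cons hAdj w, by simp [hw]⟩

lemma proj_walk (hadj : T.Adj c₁ c₂) :
    ∀ (n : ℕ) {x y : Option V} (w : (addRoot T c₁ c₂).Walk x y), w.length ≤ n →
      ∀ {a b : V}, x = some a → y = some b →
      ∃ t : T.Walk a b, t.length ≤ w.length := by
  intro n
  induction n with
  | zero =>
    intro x y w hw a b hx hy
    cases w with
    | nil =>
      subst hx
      obtain rfl : a = b := by simpa using hy
      exact ⟨.nil, by simp⟩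
    | cons h w' => simp at hw
  | succ n ih =>
    intro x y w hw a b hx hy
    cases w with
    | nil =>
      subst hx
      obtain rfl : a = b := by simpa using hy
      exact ⟨.nil, by simp⟩
    | @cons _ m _ h w' =>
      subst hx
      cases m with
      | some m' =>
        have hadj' : T.Adj a m' := ((adj_some_some T c₁ c₂).mp h).1
        obtain ⟨t, ht⟩ := ih w' (by simpa using Nat.le_of_succ_le_succ (by simpa using hw))
          rfl hy
        exact ⟨.cons hadj' t, by simpa using Nat.add_le_add_right ht 1⟩
      | none =>
        cases w' with
        | nil => simp at hy
        | @cons _ k _ h2 w'' =>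
          have hk : ∃ c, k = some c ∧ (c = c₁ ∨ c = c₂) := by
            cases k with
            | none => exact absurd h2 (addRoot T c₁ c₂).irrefl
            | some c => exact ⟨c, rfl, (adj_none_some T c₁ c₂).mp h2⟩
          obtain ⟨c, rfl, hc⟩ := hk
          have ha : a = c₁ ∨ a = c₂ := (adj_some_none T c₁ c₂).mp h
          have hw'' : w''.length ≤ n := by
            simp only [SimpleGraph.Walk.length_cons] at hw
            omega
          obtain ⟨t, ht⟩ := ih w'' hw'' rfl hy
          by_cases hac : a = c
          · subst hac
            exact ⟨t, by simp only [SimpleGraph.Walk.length_cons]; omega⟩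
          · have hadj2 : T.Adj a c := by
              rcases ha with rfl | rfl <;> rcases hc with rfl | rfl
              · exact absurd rfl hac
              · exact hadj
              · exact hadj.symm
              · exact absurd rfl hac
            exact ⟨.cons hadj2 t, by simp only [SimpleGraph.Walk.length_cons]; omega⟩

lemma proj_walk_no_root : ∀ {x y : Option V} (w : (addRoot T c₁ c₂).Walk x y),
    none ∉ w.support → ∀ {a b : V}, x = some a → y = some b →
    ∃ t : T.Walk a b, t.length = w.length ∧ s(c₁, c₂) ∉ t.edges := by
  intro x y w
  induction w with
  | nil =>
    intro _ a b hx hy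
    subst hx
    obtain rfl : a = b := by simpa using hy
    exact ⟨.nil, by simp, by simp⟩
  | @cons _ m _ h w' ih =>
    intro hn a b hx hy
    subst hx
    simp only [SimpleGraph.Walk.support_cons, List.mem_cons] at hn
    push_neg at hn
    have hm : ∃ m', m = some m' := by
      cases m with
      | none => exact absurd hn.2 (by simp [SimpleGraph.Walk.start_mem_support] at *)
      | some m' => exact ⟨m', rfl⟩
    obtain ⟨m', rfl⟩ := hm
    obtain ⟨hadj', hn1, hn2⟩ := (adj_some_some T c₁ c₂).mp h
    obtain ⟨t, ht, hte⟩ := ih hn.2 rfl hy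
    refine ⟨.cons hadj' t, by simp [ht], ?_⟩
    simp only [SimpleGraph.Walk.edges_cons, List.mem_cons]
    push_neg
    refine ⟨?_, hte⟩
    intro hEq
    rw [Sym2.eq_iff] at hEq
    rcases hEq with ⟨h1, h2⟩ | ⟨h1, h2⟩
    · exact hn1 ⟨h1.symm, h2.symm⟩
    · exact hn2 ⟨h2.symm, h1.symm⟩

lemma proj_walk_root (hadj : T.Adj c₁ c₂) :
    ∀ (n : ℕ) {x y : Option V} (w : (addRoot T c₁ c₂).Walk x y), w.length ≤ n →
      none ∈ w.support → ∀ {a b : V}, x = some a → y = some b →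
      ∃ t : T.Walk a b, t.length + 1 ≤ w.length := by
  intro n
  induction n with
  | zero =>
    intro x y w hw hns a b hx hy
    cases w with
    | nil => subst hx; simp at hns
    | cons h w' => simp at hw
  | succ n ih =>
    intro x y w hw hns a b hx hy
    cases w with
    | nil => subst hx; simp at hns
    | @cons _ m _ h w' =>
      subst hx
      cases m with
      | some m' =>
        have hadj' : T.Adj a m' := ((adj_some_some T c₁ c₂).mp h).1
        have hns' : none ∈ w'.support := by
          simp only [SimpleGraph.Walk.support_cons, List.mem_cons] at hns
          rcases hns with h' | h'
          · simp at h'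
          · exact h'
        obtain ⟨t, ht⟩ := ih w' (by simp only [SimpleGraph.Walk.length_cons] at hw; omega)
          hns' rfl hy
        exact ⟨.cons hadj' t, by simp only [SimpleGraph.Walk.length_cons]; omega⟩
      | none =>
        cases w' with
        | nil => simp at hy
        | @cons _ k _ h2 w'' =>
          have hk : ∃ c, k = some c ∧ (c = c₁ ∨ c = c₂) := by
            cases k with
            | none => exact absurd h2 (addRoot T c₁ c₂).irrefl
            | some c => exact ⟨c, rfl, (adj_none_some T c₁ c₂).mp h2⟩
          obtain ⟨c, rfl, hc⟩ := hk
          have ha : a = c₁ ∨ a = c₂ := (adj_some_none T c₁ c₂).mp h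
          obtain ⟨t, ht⟩ := proj_walk hadj w''.length w'' le_rfl rfl hy
          by_cases hac : a = c
          · subst hac
            exact ⟨t, by simp only [SimpleGraph.Walk.length_cons]; omega⟩
          · have hadj2 : T.Adj a c := by
              rcases ha with rfl | rfl <;> rcases hc with rfl | rfl
              · exact absurd rfl hac
              · exact hadj
              · exact hadj.symm
              · exact absurd rfl hac
            exact ⟨.cons hadj2 t, by simp only [SimpleGraph.Walk.length_cons]; omega⟩

end Walks
section Main
variable [Fintype V] [Nonempty V] {T : SimpleGraph V} {c₁ c₂ : V}

/-- In a tree, the two endpoints of an edge are at different distances from any vertex. -/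
lemma dist_ne (hT : T.IsTree) (hadj : T.Adj c₁ c₂) (u : V) : T.dist c₁ u ≠ T.dist c₂ u := by
  intro heq
  have hreach1 : T.Reachable c₁ u := hT.isConnected c₁ u
  have hreach2 : T.Reachable c₂ u := hT.isConnected c₂ u
  obtain ⟨p, hp, hpl⟩ := hreach1.exists_path_of_dist
  obtain ⟨q, hq, hql⟩ := hreach2.exists_path_of_dist
  have h12 : T.dist c₁ c₂ = 1 := dist_eq_one_iff_adj.mpr hadj
  have hc2 : c₂ ∉ p.support := by
    intro hmem
    have := dist_add_dist_le p hmem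
    rw [hpl, h12, heq] at this
    omega
  have hP2 : (SimpleGraph.Walk.cons hadj.symm p).IsPath :=
    (SimpleGraph.Walk.cons_isPath_iff _ _).mpr ⟨hp, hc2⟩
  have huniq := (isAcyclic_iff_path_unique.mp hT.IsAcyclic)
    (⟨q, hq⟩ : T.Path c₂ u) ⟨SimpleGraph.Walk.cons hadj.symm p, hP2⟩
  have : q.length = (SimpleGraph.Walk.cons hadj.symm p).length :=
    congrArg (fun r : T.Path c₂ u => r.1.length) huniq
  rw [hql, SimpleGraph.Walk.length_cons, hpl, heq] at this
  omega

/-- Key: every walk from `c₁` to a vertex strictly farther from `c₂`'s side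
uses the edge `c₁c₂`. -/
lemma edge_mem_walk (hT : T.IsTree) (hadj : T.Adj c₁ c₂) {v : V} (hv : T.dist c₂ v + 1 = T.dist c₁ v)
    (t : T.Walk c₁ v) : s(c₁, c₂) ∈ t.edges := by
  classical
  by_contra hnot
  have hbp : s(c₁, c₂) ∉ t.bypass.edges := fun h => hnot (t.edges_bypass_subset h)
  obtain ⟨q, hq, hql⟩ := (hT.isConnected c₂ v).exists_path_of_dist
  have hc1 : c₁ ∉ q.support := by
    intro hmem
    have h21 : T.dist c₂ c₁ = 1 := dist_eq_one_iff_adj.mpr hadj.symm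
    have := dist_add_dist_le q hmem
    rw [hql, h21] at this
    omega
  have hP : (SimpleGraph.Walk.cons hadj q).IsPath :=
    (SimpleGraph.Walk.cons_isPath_iff _ _).mpr ⟨hq, hc1⟩
  have huniq := (isAcyclic_iff_path_unique.mp hT.IsAcyclic)
    (⟨t.bypass, t.bypass_isPath⟩ : T.Path c₁ v) ⟨SimpleGraph.Walk.cons hadj q, hP⟩
  have hedges : t.bypass.edges = (SimpleGraph.Walk.cons hadj q).edges :=
    congrArg (fun r : T.Path c₁ v => r.1.edges) huniq
  apply hbp
  rw [hedges, SimpleGraph.Walk.edges_cons]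
  exact List.mem_cons_self

end Main
section Ecc
variable [Fintype V] [Nonempty V] {T : SimpleGraph V} {c₁ c₂ : V}

lemma root_walk_aux (hT : T.IsTree) {x y u : V} (hadj : T.Adj x y)
    (hlt : T.dist x u < T.dist y u) :
    ∃ p : T.Walk x u, p.length = T.dist x u ∧ y ∉ p.support := by
  obtain ⟨p, hp, hpl⟩ := (hT.isConnected x u).exists_path_of_dist
  refine ⟨p, hpl, fun hmem => ?_⟩
  have h1 : T.dist x y = 1 := dist_eq_one_iff_adj.mpr hadj
  have := dist_add_dist_le p hmem
  rw [hpl, h1] at this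
  omega

lemma root_short (hT : T.IsTree) (hadj : T.Adj c₁ c₂)
    (hcen : gCenter T = {c₁, c₂}) (u : V) :
    ∃ w : (addRoot T c₁ c₂).Walk none (some u), w.length ≤ gRad T := by
  have hec1 : gEcc T c₁ = gRad T := by
    have : c₁ ∈ gCenter T := by rw [hcen]; left; rfl
    exact this
  have hec2 : gEcc T c₂ = gRad T := by
    have : c₂ ∈ gCenter T := by rw [hcen]; right; rfl
    exact this
  have hd1 : T.dist c₁ u ≤ gRad T := hec1 ▸ Finset.le_sup (Finset.mem_univ u)
  have hd2 : T.dist c₂ u ≤ gRad T := hec2 ▸ Finset.le_sup (Finset.mem_univ u)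
  have hne' := dist_ne hT hadj u
  rcases Nat.lt_or_ge (T.dist c₁ u) (T.dist c₂ u) with hlt | hge
  · obtain ⟨p, hpl, hy⟩ := root_walk_aux hT hadj hlt
    have hpe : s(c₁, c₂) ∉ p.edges := fun h =>
      hy (SimpleGraph.Walk.snd_mem_support_of_mem_edges p h)
    obtain ⟨w, hw⟩ := lift_walk p hpe
    refine ⟨.cons ((adj_none_some T c₁ c₂).mpr (Or.inl rfl)) w, ?_⟩
    rw [SimpleGraph.Walk.length_cons, hw, hpl]
    omega
  · have hlt : T.dist c₂ u < T.dist c₁ u := lt_of_le_of_ne hge (Ne.symm hne')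
    obtain ⟨p, hpl, hy⟩ := root_walk_aux hT hadj.symm hlt
    have hpe : s(c₁, c₂) ∉ p.edges := fun h =>
      hy (SimpleGraph.Walk.fst_mem_support_of_mem_edges p h)
    obtain ⟨w, hw⟩ := lift_walk p hpe
    refine ⟨.cons ((adj_none_some T c₁ c₂).mpr (Or.inr rfl)) w, ?_⟩
    rw [SimpleGraph.Walk.length_cons, hw, hpl]
    omega

lemma addRoot_connected (hT : T.IsTree) (hadj : T.Adj c₁ c₂)
    (hcen : gCenter T = {c₁, c₂}) : (addRoot T c₁ c₂).Connected := by
  rw [SimpleGraph.connected_iff]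
  refine ⟨fun x y => ?_, ⟨none⟩⟩
  have key : ∀ z : Option V, (addRoot T c₁ c₂).Reachable none z := by
    rintro (_ | u)
    · rfl
    · obtain ⟨w, -⟩ := root_short hT hadj hcen u
      exact ⟨w⟩
  exact (key x).symm.trans (key y)

lemma ecc_root_le (hT : T.IsTree) (hadj : T.Adj c₁ c₂)
    (hcen : gCenter T = {c₁, c₂}) :
    gEcc (addRoot T c₁ c₂) none ≤ gRad T := by
  refine Finset.sup_le ?_
  rintro (_ | u) -
  · simp [SimpleGraph.dist_self]
  · obtain ⟨w, hw⟩ := root_short hT hadj hcen u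
    exact le_trans (SimpleGraph.dist_le w) hw

lemma dist_lower (hT : T.IsTree) (hadj : T.Adj c₁ c₂)
    (hcen : gCenter T = {c₁, c₂}) (a b : V) :
    T.dist a b ≤ (addRoot T c₁ c₂).dist (some a) (some b) := by
  obtain ⟨w, -, hwl⟩ :=
    ((addRoot_connected hT hadj hcen) (some a) (some b)).exists_path_of_dist
  obtain ⟨t, ht⟩ := proj_walk hadj w.length w le_rfl rfl rfl
  calc T.dist a b ≤ t.length := SimpleGraph.dist_le t
    _ ≤ w.length := ht
    _ = _ := hwl

lemma ecc_some_ge (hT : T.IsTree) (hne : c₁ ≠ c₂) (hadj : T.Adj c₁ c₂)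
    (hcen : gCenter T = {c₁, c₂}) (x : V) :
    gRad T + 1 ≤ gEcc (addRoot T c₁ c₂) (some x) := by
  have hrad_le : gRad T ≤ gEcc T x := Finset.inf'_le _ (Finset.mem_univ x)
  have claim : ∀ y o : V, T.Adj y o → s(y, o) = s(c₁, c₂) → gEcc T y = gRad T →
      gEcc T o = gRad T → gRad T + 1 ≤ gEcc (addRoot T c₁ c₂) (some y) := by
    intro y o hyo hsym hey heo
    obtain ⟨v, -, hv⟩ := Finset.exists_mem_eq_sup Finset.univ Finset.univ_nonempty
      (fun u => T.dist y u)
    have hyv : T.dist y v = gRad T := by rw [← hey]; exact hv.symm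
    have hov_le : T.dist o v ≤ gRad T := heo ▸ Finset.le_sup (Finset.mem_univ v)
    have hne' := dist_ne hT hyo v
    have htri : T.dist y v ≤ T.dist y o + T.dist o v :=
      (hT.isConnected).dist_triangle
    rw [dist_eq_one_iff_adj.mpr hyo] at htri
    have hov : T.dist o v + 1 = T.dist y v := by omega
    -- now show the distance in T' is at least gRad T + 1
    obtain ⟨w, -, hwl⟩ :=
      ((addRoot_connected hT hadj hcen) (some y) (some v)).exists_path_of_dist
    have hdist : gRad T + 1 ≤ (addRoot T c₁ c₂).dist (some y) (some v) := by
      by_cases hns : none ∈ w.support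
      · obtain ⟨t, ht⟩ := proj_walk_root hadj w.length w le_rfl hns rfl rfl
        have := SimpleGraph.dist_le t
        omega
      · obtain ⟨t, -, hte⟩ := proj_walk_no_root w hns rfl rfl
        have := edge_mem_walk hT hyo hov t
        rw [hsym] at this
        exact absurd this hte
    exact le_trans hdist (Finset.le_sup (Finset.mem_univ (some v)))
  rcases eq_or_lt_of_le hrad_le with heq | hlt
  · have hx : x ∈ gCenter T := heq.symm
    rw [hcen] at hx
    have hec1 : gEcc T c₁ = gRad T := by
      have : c₁ ∈ gCenter T := by rw [hcen]; left; rfl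
      exact this
    have hec2 : gEcc T c₂ = gRad T := by
      have : c₂ ∈ gCenter T := by rw [hcen]; right; rfl
      exact this
    rcases hx with rfl | rfl
    · exact claim x c₂ hadj rfl hec1 hec2
    · exact claim x c₁ hadj.symm (Sym2.eq_swap) hec2 hec1
  · obtain ⟨u, -, hu⟩ := Finset.exists_mem_eq_sup Finset.univ Finset.univ_nonempty
      (fun u => T.dist x u)
    have h1 : gRad T + 1 ≤ T.dist x u := by
      have : gEcc T x = T.dist x u := hu
      omega
    calc gRad T + 1 ≤ T.dist x u := h1
      _ ≤ (addRoot T c₁ c₂).dist (some x) (some u) := dist_lower hT hadj hcen x u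
      _ ≤ _ := Finset.le_sup (Finset.mem_univ (some u))

lemma root_fixed (hT : T.IsTree) (hne : c₁ ≠ c₂) (hadj : T.Adj c₁ c₂)
    (hcen : gCenter T = {c₁, c₂}) (ψ : addRoot T c₁ c₂ ≃g addRoot T c₁ c₂) :
    ψ none = none := by
  cases hψ : ψ none with
  | none => rfl
  | some x =>
    exfalso
    have h1 : gEcc (addRoot T c₁ c₂) (ψ none) = gEcc (addRoot T c₁ c₂) none :=
      iso_ecc ψ none
    rw [hψ] at h1
    have h2 := ecc_some_ge hT hne hadj hcen x
    have h3 := ecc_root_le hT hadj hcen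
    omega

end Ecc
section Iso
variable {T : SimpleGraph V} {c₁ c₂ : V}

lemma lift_iso (hne : c₁ ≠ c₂) (hadj : T.Adj c₁ c₂) (φ : T ≃g T)
    (hperm : (φ c₁ = c₁ ∧ φ c₂ = c₂) ∨ (φ c₁ = c₂ ∧ φ c₂ = c₁)) :
    ∃ ψ : addRoot T c₁ c₂ ≃g addRoot T c₁ c₂,
      ψ none = none ∧ ∀ v, ψ (some v) = some (φ v) := by
  have hmem : ∀ b : V, (φ b = c₁ ∨ φ b = c₂) ↔ (b = c₁ ∨ b = c₂) := by
    intro b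
    constructor
    · rcases hperm with ⟨h1, h2⟩ | ⟨h1, h2⟩ <;>
        rintro (h | h)
      · exact Or.inl (φ.injective (h.trans h1.symm))
      · exact Or.inr (φ.injective (h.trans h2.symm))
      · exact Or.inr (φ.injective (h.trans h2.symm))
      · exact Or.inl (φ.injective (h.trans h1.symm))
    · rcases hperm with ⟨h1, h2⟩ | ⟨h1, h2⟩ <;> rintro (rfl | rfl) <;> simp [h1, h2]
  have hpair : ∀ a b : V,
      ((φ a = c₁ ∧ φ b = c₂) ∨ (φ a = c₂ ∧ φ b = c₁)) ↔
      ((a = c₁ ∧ b = c₂) ∨ (a = c₂ ∧ b = c₁)) := by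
    intro a b
    constructor
    · rcases hperm with ⟨h1, h2⟩ | ⟨h1, h2⟩ <;> rintro (⟨ha, hb⟩ | ⟨ha, hb⟩)
      · exact Or.inl ⟨φ.injective (ha.trans h1.symm), φ.injective (hb.trans h2.symm)⟩
      · exact Or.inr ⟨φ.injective (ha.trans h2.symm), φ.injective (hb.trans h1.symm)⟩
      · exact Or.inr ⟨φ.injective (ha.trans h2.symm), φ.injective (hb.trans h1.symm)⟩
      · exact Or.inl ⟨φ.injective (ha.trans h1.symm), φ.injective (hb.trans h2.symm)⟩
    · rcases hperm with ⟨h1, h2⟩ | ⟨h1, h2⟩ <;> rintro (⟨rfl, rfl⟩ | ⟨rfl, rfl⟩) <;>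
        simp [h1, h2]
  refine ⟨⟨φ.toEquiv.optionCongr, ?_⟩, rfl, fun v => rfl⟩
  rintro (_ | a) (_ | b)
  · simp
  · simp only [Equiv.optionCongr_apply, Option.map_none, Option.map_some,
      RelIso.coe_fn_toEquiv]
    rw [adj_none_some, adj_none_some, hmem]
  · simp only [Equiv.optionCongr_apply, Option.map_none, Option.map_some,
      RelIso.coe_fn_toEquiv]
    rw [adj_some_none, adj_some_none, hmem]
  · simp only [Equiv.optionCongr_apply, Option.map_some, RelIso.coe_fn_toEquiv]
    rw [adj_some_some, adj_some_some]
    have h1 := hpair a b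
    have h2 : T.Adj (φ a) (φ b) ↔ T.Adj a b := φ.map_adj_iff
    tauto

lemma restrict_adj (hne : c₁ ≠ c₂) (hadj : T.Adj c₁ c₂)
    (ψ : addRoot T c₁ c₂ ≃g addRoot T c₁ c₂) (hnone : ψ none = none)
    {a b : V} (hab : T.Adj a b) :
    T.Adj (Equiv.removeNone ψ.toEquiv a) (Equiv.removeNone ψ.toEquiv b) := by
  set f := Equiv.removeNone ψ.toEquiv with hf
  have hsome : ∀ v : V, ψ (some v) = some (f v) := by
    intro v
    have hex : ∃ x', ψ.toEquiv (some v) = some x' := by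
      cases hx : ψ.toEquiv (some v) with
      | none =>
        exfalso
        have : ψ.toEquiv (some v) = ψ.toEquiv none := by
          rw [hx]; exact hnone.symm
        exact (Option.some_ne_none v) (ψ.toEquiv.injective this)
      | some x => exact ⟨x, rfl⟩
    exact (Equiv.removeNone_some ψ.toEquiv hex).symm
  by_cases hc : (a = c₁ ∧ b = c₂) ∨ (a = c₂ ∧ b = c₁)
  · have h1 : f c₁ = c₁ ∨ f c₁ = c₂ := by
      have hA : (addRoot T c₁ c₂).Adj (some c₁) none :=
        (adj_some_none T c₁ c₂).mpr (Or.inl rfl)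
      have := ψ.map_adj_iff.mpr hA
      rw [hsome, hnone] at this
      exact (adj_some_none T c₁ c₂).mp this
    have h2 : f c₂ = c₁ ∨ f c₂ = c₂ := by
      have hA : (addRoot T c₁ c₂).Adj (some c₂) none :=
        (adj_some_none T c₁ c₂).mpr (Or.inr rfl)
      have := ψ.map_adj_iff.mpr hA
      rw [hsome, hnone] at this
      exact (adj_some_none T c₁ c₂).mp this
    have hne2 : f c₁ ≠ f c₂ := fun h => hne (f.injective h)
    rcases hc with ⟨rfl, rfl⟩ | ⟨rfl, rfl⟩ <;> rcases h1 with e1 | e1 <;>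
      rcases h2 with e2 | e2 <;>
      first
      | (exact absurd (e1.trans e2.symm) hne2)
      | (exact absurd (e2.trans e1.symm) hne2)
      | (rw [e1, e2]; exact hadj)
      | (rw [e1, e2]; exact hadj.symm)
  · push_neg at hc
    have hA : (addRoot T c₁ c₂).Adj (some a) (some b) := by
      rw [adj_some_some]
      refine ⟨hab, ?_, ?_⟩
      · rintro ⟨rfl, rfl⟩; exact (hc.1 rfl) rfl
      · rintro ⟨rfl, rfl⟩; exact (hc.2 rfl) rfl
    have := ψ.map_adj_iff.mpr hA
    rw [hsome, hsome] at this
    exact ((adj_some_some T c₁ c₂).mp this).1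

lemma restrict_iso (hne : c₁ ≠ c₂) (hadj : T.Adj c₁ c₂)
    (ψ : addRoot T c₁ c₂ ≃g addRoot T c₁ c₂) (hnone : ψ none = none) :
    ∃ φ : T ≃g T, ∀ v, ψ (some v) = some (φ v) := by
  have hnone' : ψ.symm none = none := by
    have := congrArg ψ.symm hnone
    simpa using this.symm
  have hsome : ∀ v : V, ψ (some v) = some (Equiv.removeNone ψ.toEquiv v) := by
    intro v
    have hex : ∃ x', ψ.toEquiv (some v) = some x' := by
      cases hx : ψ.toEquiv (some v) with
      | none =>
        exfalso
        have : ψ.toEquiv (some v) = ψ.toEquiv none := by rw [hx]; exact hnone.symm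
        exact (Option.some_ne_none v) (ψ.toEquiv.injective this)
      | some x => exact ⟨x, rfl⟩
    exact (Equiv.removeNone_some ψ.toEquiv hex).symm
  refine ⟨⟨Equiv.removeNone ψ.toEquiv, ?_⟩, hsome⟩
  intro a b
  constructor
  · intro h
    have := restrict_adj hne hadj ψ.symm hnone' h
    have hrw : ∀ x : V,
        Equiv.removeNone ψ.symm.toEquiv (Equiv.removeNone ψ.toEquiv x) = x :=
      fun x => Equiv.removeNone_aux_inv ψ.toEquiv x
    rwa [hrw, hrw] at this
  · exact restrict_adj hne hadj ψ hnone

end Iso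

theorem stmt18 [Fintype V] [Nonempty V] (T : SimpleGraph V) (hT : T.IsTree)
    (c₁ c₂ : V) (hne : c₁ ≠ c₂) (hadj : T.Adj c₁ c₂)
    (hcen : gCenter T = {c₁, c₂}) :
    distinguishingNumber T = distinguishingNumber (addRoot T c₁ c₂) := by
  have hset : {r : ℕ | ∃ f : V → Fin r, IsDistinguishing T f} =
      {r : ℕ | ∃ f : Option V → Fin r, IsDistinguishing (addRoot T c₁ c₂) f} := by
    ext r
    simp only [Set.mem_setOf_eq]
    constructor
    · rintro ⟨f, hf⟩
      refine ⟨fun x => x.elim (f (Classical.arbitrary V)) f, ?_⟩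
      intro ψ hψf
      have hnone := root_fixed hT hne hadj hcen ψ
      obtain ⟨φ, hφsome⟩ := restrict_iso hne hadj ψ hnone
      have hpres : ∀ v, f (φ v) = f v := by
        intro v
        have := hψf (some v)
        rw [hφsome] at this
        exact this
      have hid := hf φ hpres
      rintro (_ | v)
      · exact hnone
      · rw [hφsome v, hid v]
    · rintro ⟨f, hf⟩
      refine ⟨fun v => f (some v), ?_⟩
      intro φ hφf
      have hcent : ∀ x : V, gEcc T x = gRad T → gEcc T (φ x) = gRad T := by
        intro x hx
        rw [iso_ecc φ x, hx]
      have hc1 : φ c₁ = c₁ ∨ φ c₁ = c₂ := by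
        have h1 : c₁ ∈ gCenter T := by rw [hcen]; left; rfl
        have h2 : φ c₁ ∈ gCenter T := hcent c₁ h1
        rw [hcen] at h2
        exact h2
      have hc2 : φ c₂ = c₁ ∨ φ c₂ = c₂ := by
        have h1 : c₂ ∈ gCenter T := by rw [hcen]; right; rfl
        have h2 : φ c₂ ∈ gCenter T := hcent c₂ h1
        rw [hcen] at h2
        exact h2
      have hperm : (φ c₁ = c₁ ∧ φ c₂ = c₂) ∨ (φ c₁ = c₂ ∧ φ c₂ = c₁) := by
        rcases hc1 with e1 | e1 <;> rcases hc2 with e2 | e2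
        · exact absurd (φ.injective (e1.trans e2.symm)) hne
        · exact Or.inl ⟨e1, e2⟩
        · exact Or.inr ⟨e1, e2⟩
        · exact absurd (φ.injective (e1.trans e2.symm)) hne
      obtain ⟨ψ, hψn, hψs⟩ := lift_iso hne hadj φ hperm
      have hψf : ∀ x, f (ψ x) = f x := by
        rintro (_ | v)
        · rw [hψn]
        · rw [hψs]
          exact hφf v
      have hid := hf ψ hψf
      intro v
      have := hid (some v)
      rw [hψs] at this
      exact Option.some_injective _ this
  unfold distinguishingNumber
  rw [hset]
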